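/- Let F be a field, R the ring of ternions over F, and n ≥ 1. Under the action of GL_{n+1}(R) on the set of all cyclic submodules of the left R-module R^{n+1} (a cyclic submodule R·X is mapped to R·(X·A) for A ∈ GL_{n+1}(R)), there are exactly six orbits. -/

import Mathlib

set_option synthInstance.maxHeartbeats 1000000
set_option maxHeartbeats 1000000

def ternions (F : Type) [Field F] : Subring (Matrix (Fin 2) (Fin 2) F) where
  carrier := {A | A 1 0 = 0}
  zero_mem' := by simp
  one_mem' := by simp [Matrix.one_apply]
  add_mem' := by
    intro a b ha hb
    simp only [Set.mem_setOf_eq, Matrix.add_apply] at *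
    simp [ha, hb]
  neg_mem' := by
    intro a ha
    simp only [Set.mem_setOf_eq, Matrix.neg_apply] at *
    simp [ha]
  mul_mem' := by
    intro a b ha hb
    simp only [Set.mem_setOf_eq, Matrix.mul_apply, Fin.sum_univ_two] at *
    simp [ha, hb]

namespace TernionsOrbit

variable {F : Type} [Field F]

lemma mem_ternions {A : Matrix (Fin 2) (Fin 2) F} : A ∈ ternions F ↔ A 1 0 = 0 := Iff.rfl

/-- entry constructor -/
def tern (a b c : F) : ternions F := ⟨!![a, b; 0, c], by simp [mem_ternions]⟩

@[simp] lemma tern_val (a b c : F) : ((tern a b c : ternions F) : Matrix (Fin 2) (Fin 2) F) = !![a, b; 0, c] := rfl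

lemma val10 (x : ternions F) : (x : Matrix (Fin 2) (Fin 2) F) 1 0 = 0 := x.2

lemma tern_mul (a b c a' b' c' : F) :
    tern a b c * tern a' b' c' = tern (a * a') (a * b' + b * c') (c * c') := by
  apply Subtype.ext
  push_cast [tern_val]
  rw [Matrix.mul_fin_two]
  norm_num

lemma tern_one : (1 : ternions F) = tern 1 0 1 := by
  apply Subtype.ext
  simp [Matrix.one_fin_two]

lemma tern_zero : (0 : ternions F) = tern 0 0 0 := by
  apply Subtype.ext
  simp [tern_val]
  ext i j
  fin_cases i <;> fin_cases j <;> simp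

lemma tern_injective {a b c a' b' c' : F} (h : (tern a b c : ternions F) = tern a' b' c') :
    a = a' ∧ b = b' ∧ c = c' := by
  have := congrArg Subtype.val h
  simp only [tern_val] at this
  refine ⟨?_, ?_, ?_⟩
  · simpa using congrFun (congrFun this 0) 0
  · simpa using congrFun (congrFun this 0) 1
  · simpa using congrFun (congrFun this 1) 1

lemma isUnit_tern {a c : F} (b : F) (ha : a ≠ 0) (hc : c ≠ 0) : IsUnit (tern a b c) := by
  refine ⟨⟨tern a b c, tern a⁻¹ (-(a⁻¹ * b * c⁻¹)) c⁻¹, ?_, ?_⟩, rfl⟩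
  · rw [tern_mul, mul_inv_cancel₀ ha, mul_inv_cancel₀ hc,
      show a * -(a⁻¹ * b * c⁻¹) + b * c⁻¹ = 0 by field_simp; ring, ← tern_one]
  · rw [tern_mul, inv_mul_cancel₀ ha, inv_mul_cancel₀ hc,
      show a⁻¹ * b + -(a⁻¹ * b * c⁻¹) * c = 0 by field_simp; ring, ← tern_one]

/-- entry extraction as additive hom -/
def entryHom (p q : Fin 2) : ternions F →+ F where
  toFun x := (x : Matrix (Fin 2) (Fin 2) F) p q
  map_zero' := rfl
  map_add' _ _ := rfl

lemma val00_mul (x y : ternions F) :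
    ((x * y : ternions F) : Matrix (Fin 2) (Fin 2) F) 0 0
      = (x : Matrix (Fin 2) (Fin 2) F) 0 0 * (y : Matrix (Fin 2) (Fin 2) F) 0 0 := by
  push_cast
  rw [Matrix.mul_apply, Fin.sum_univ_two, val10 y]
  ring

lemma val01_mul (x y : ternions F) :
    ((x * y : ternions F) : Matrix (Fin 2) (Fin 2) F) 0 1
      = (x : Matrix (Fin 2) (Fin 2) F) 0 0 * (y : Matrix (Fin 2) (Fin 2) F) 0 1
        + (x : Matrix (Fin 2) (Fin 2) F) 0 1 * (y : Matrix (Fin 2) (Fin 2) F) 1 1 := by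
  push_cast
  rw [Matrix.mul_apply, Fin.sum_univ_two]

lemma val11_mul (x y : ternions F) :
    ((x * y : ternions F) : Matrix (Fin 2) (Fin 2) F) 1 1
      = (x : Matrix (Fin 2) (Fin 2) F) 1 1 * (y : Matrix (Fin 2) (Fin 2) F) 1 1 := by
  push_cast
  rw [Matrix.mul_apply, Fin.sum_univ_two, val10 x]
  ring

end TernionsOrbit
namespace TernionsOrbit

variable {F : Type} [Field F] {m : ℕ}

/-- component extraction for vectors -/
def pa (X : Fin m → ternions F) : Fin m → F := fun i => (X i : Matrix (Fin 2) (Fin 2) F) 0 0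
def pb (X : Fin m → ternions F) : Fin m → F := fun i => (X i : Matrix (Fin 2) (Fin 2) F) 0 1
def pc (X : Fin m → ternions F) : Fin m → F := fun i => (X i : Matrix (Fin 2) (Fin 2) F) 1 1

lemma vec_ext {X Y : Fin m → ternions F} (h1 : pa X = pa Y) (h2 : pb X = pb Y)
    (h3 : pc X = pc Y) : X = Y := by
  funext i
  apply Subtype.ext
  ext p q
  fin_cases p <;> fin_cases q
  · exact congrFun h1 i
  · exact congrFun h2 i
  · show (X i : Matrix (Fin 2) (Fin 2) F) 1 0 = (Y i : Matrix (Fin 2) (Fin 2) F) 1 0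
    rw [val10, val10]
  · exact congrFun h3 i

lemma smul_apply' (r : ternions F) (X : Fin m → ternions F) (i : Fin m) :
    (r • X) i = r * X i := rfl

lemma pa_smul (r : ternions F) (X : Fin m → ternions F) :
    pa (r • X) = (r : Matrix (Fin 2) (Fin 2) F) 0 0 • pa X := by
  funext i; simpa [pa, smul_apply'] using val00_mul r (X i)

lemma pb_smul (r : ternions F) (X : Fin m → ternions F) :
    pb (r • X) = (r : Matrix (Fin 2) (Fin 2) F) 0 0 • pb X
      + (r : Matrix (Fin 2) (Fin 2) F) 0 1 • pc X := by
  funext i; simpa [pb, pc, smul_apply'] using val01_mul r (X i)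

lemma pc_smul (r : ternions F) (X : Fin m → ternions F) :
    pc (r • X) = (r : Matrix (Fin 2) (Fin 2) F) 1 1 • pc X := by
  funext i; simpa [pc, smul_apply'] using val11_mul r (X i)

/-- component extraction for matrices -/
def ma (A : Matrix (Fin m) (Fin m) (ternions F)) : Matrix (Fin m) (Fin m) F :=
  fun i j => (A i j : Matrix (Fin 2) (Fin 2) F) 0 0
def mb (A : Matrix (Fin m) (Fin m) (ternions F)) : Matrix (Fin m) (Fin m) F :=
  fun i j => (A i j : Matrix (Fin 2) (Fin 2) F) 0 1
def mc (A : Matrix (Fin m) (Fin m) (ternions F)) : Matrix (Fin m) (Fin m) F :=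
  fun i j => (A i j : Matrix (Fin 2) (Fin 2) F) 1 1

lemma pa_vecMul (X : Fin m → ternions F) (A : Matrix (Fin m) (Fin m) (ternions F)) :
    pa (Matrix.vecMul X A) = Matrix.vecMul (pa X) (ma A) := by
  funext i
  show entryHom 0 0 (∑ j, X j * A j i) = _
  rw [map_sum]
  exact Finset.sum_congr rfl fun j _ => val00_mul (X j) (A j i)

lemma pb_vecMul (X : Fin m → ternions F) (A : Matrix (Fin m) (Fin m) (ternions F)) :
    pb (Matrix.vecMul X A) = Matrix.vecMul (pa X) (mb A) + Matrix.vecMul (pb X) (mc A) := by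
  funext i
  show entryHom 0 1 (∑ j, X j * A j i) = _
  rw [map_sum]
  show _ = (∑ j, pa X j * mb A j i) + (∑ j, pb X j * mc A j i)
  rw [← Finset.sum_add_distrib]
  exact Finset.sum_congr rfl fun j _ => val01_mul (X j) (A j i)

lemma pc_vecMul (X : Fin m → ternions F) (A : Matrix (Fin m) (Fin m) (ternions F)) :
    pc (Matrix.vecMul X A) = Matrix.vecMul (pc X) (mc A) := by
  funext i
  show entryHom 1 1 (∑ j, X j * A j i) = _
  rw [map_sum]
  exact Finset.sum_congr rfl fun j _ => val11_mul (X j) (A j i)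

/-- ring homs onto diagonal components -/
def pi0 : ternions F →+* F where
  toFun x := (x : Matrix (Fin 2) (Fin 2) F) 0 0
  map_one' := by simp [Matrix.one_apply]
  map_mul' := val00_mul
  map_zero' := rfl
  map_add' _ _ := rfl

def pi2 : ternions F →+* F where
  toFun x := (x : Matrix (Fin 2) (Fin 2) F) 1 1
  map_one' := by simp [Matrix.one_apply]
  map_mul' := val11_mul
  map_zero' := rfl
  map_add' _ _ := rfl

lemma ma_eq_map (A : Matrix (Fin m) (Fin m) (ternions F)) : ma A = A.map pi0 := rfl
lemma mc_eq_map (A : Matrix (Fin m) (Fin m) (ternions F)) : mc A = A.map pi2 := rfl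

lemma isUnit_ma {A : Matrix (Fin m) (Fin m) (ternions F)} (hA : IsUnit A) : IsUnit (ma A) := by
  rw [ma_eq_map]
  exact hA.map (RingHom.mapMatrix (pi0 (F := F)))

lemma isUnit_mc {A : Matrix (Fin m) (Fin m) (ternions F)} (hA : IsUnit A) : IsUnit (mc A) := by
  rw [mc_eq_map]
  exact hA.map (RingHom.mapMatrix (pi2 (F := F)))

lemma vecMul_eq_zero_iff {B : Matrix (Fin m) (Fin m) F} (hB : IsUnit B) {v : Fin m → F} :
    Matrix.vecMul v B = 0 ↔ v = 0 := by
  obtain ⟨u, rfl⟩ := hB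
  constructor
  · intro h
    have : Matrix.vecMul (Matrix.vecMul v u.val) u.inv = 0 := by rw [h, Matrix.zero_vecMul]
    rwa [Matrix.vecMul_vecMul, u.val_inv, Matrix.vecMul_one] at this
  · rintro rfl; exact Matrix.zero_vecMul _

lemma smul_vecMul' (l : F) (v : Fin m → F) (B : Matrix (Fin m) (Fin m) F) :
    Matrix.vecMul (l • v) B = l • Matrix.vecMul v B := by
  funext j
  simp [Matrix.vecMul, dotProduct, Finset.mul_sum, mul_assoc]

end TernionsOrbit
namespace TernionsOrbit

open Matrix
variable {F : Type} [Field F] {m : ℕ}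

/-- build a ternion matrix from three F-matrices -/
def mk3 (α β γ : Matrix (Fin m) (Fin m) F) : Matrix (Fin m) (Fin m) (ternions F) :=
  fun i j => tern (α i j) (β i j) (γ i j)

lemma ma_mk3 (α β γ : Matrix (Fin m) (Fin m) F) : ma (mk3 α β γ) = α := rfl
lemma mb_mk3 (α β γ : Matrix (Fin m) (Fin m) F) : mb (mk3 α β γ) = β := by
  funext i j; simp [mb, mk3]
lemma mc_mk3 (α β γ : Matrix (Fin m) (Fin m) F) : mc (mk3 α β γ) = γ := by
  funext i j; simp [mc, mk3]

lemma elem_ext {x y : ternions F}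
    (h1 : (x : Matrix (Fin 2) (Fin 2) F) 0 0 = (y : Matrix (Fin 2) (Fin 2) F) 0 0)
    (h2 : (x : Matrix (Fin 2) (Fin 2) F) 0 1 = (y : Matrix (Fin 2) (Fin 2) F) 0 1)
    (h3 : (x : Matrix (Fin 2) (Fin 2) F) 1 1 = (y : Matrix (Fin 2) (Fin 2) F) 1 1) : x = y := by
  apply Subtype.ext
  ext p q
  fin_cases p <;> fin_cases q
  · exact h1
  · exact h2
  · show (x : Matrix (Fin 2) (Fin 2) F) 1 0 = (y : Matrix (Fin 2) (Fin 2) F) 1 0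
    rw [val10, val10]
  · exact h3

@[simp] lemma tern_val00 (a b c : F) : ((tern a b c : ternions F) : Matrix (Fin 2) (Fin 2) F) 0 0 = a := rfl
@[simp] lemma tern_val01 (a b c : F) : ((tern a b c : ternions F) : Matrix (Fin 2) (Fin 2) F) 0 1 = b := rfl
@[simp] lemma tern_val11 (a b c : F) : ((tern a b c : ternions F) : Matrix (Fin 2) (Fin 2) F) 1 1 = c := rfl
@[simp] lemma entryHom_apply (p q : Fin 2) (x : ternions F) :
    entryHom p q x = (x : Matrix (Fin 2) (Fin 2) F) p q := rfl

@[simp] lemma tern_val10 (a b c : F) : ((tern a b c : ternions F) : Matrix (Fin 2) (Fin 2) F) 1 0 = 0 := rfl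

lemma mk3_mul (α β γ α' β' γ' : Matrix (Fin m) (Fin m) F) :
    mk3 α β γ * mk3 α' β' γ' = mk3 (α * α') (α * β' + β * γ') (γ * γ') := by
  funext i j
  apply elem_ext
  · show entryHom 0 0 (∑ l, mk3 α β γ i l * mk3 α' β' γ' l j) = _
    rw [map_sum]
    show (∑ l, entryHom 0 0 (tern (α i l) (β i l) (γ i l) * tern (α' l j) (β' l j) (γ' l j)))
      = (α * α') i j
    simp only [tern_mul, entryHom_apply, tern_val00]
    rw [Matrix.mul_apply]
  · show entryHom 0 1 (∑ l, mk3 α β γ i l * mk3 α' β' γ' l j) = _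
    rw [map_sum]
    show (∑ l, entryHom 0 1 (tern (α i l) (β i l) (γ i l) * tern (α' l j) (β' l j) (γ' l j)))
      = (α * β' + β * γ') i j
    simp only [tern_mul, entryHom_apply, tern_val01]
    rw [Finset.sum_add_distrib, Matrix.add_apply, Matrix.mul_apply, Matrix.mul_apply]
  · show entryHom 1 1 (∑ l, mk3 α β γ i l * mk3 α' β' γ' l j) = _
    rw [map_sum]
    show (∑ l, entryHom 1 1 (tern (α i l) (β i l) (γ i l) * tern (α' l j) (β' l j) (γ' l j)))
      = (γ * γ') i j
    simp only [tern_mul, entryHom_apply, tern_val11]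
    rw [Matrix.mul_apply]

lemma mk3_one : mk3 (1 : Matrix (Fin m) (Fin m) F) 0 1 = 1 := by
  funext i j
  show tern ((1 : Matrix (Fin m) (Fin m) F) i j) ((0 : Matrix (Fin m) (Fin m) F) i j)
    ((1 : Matrix (Fin m) (Fin m) F) i j) = (1 : Matrix (Fin m) (Fin m) (ternions F)) i j
  by_cases h : i = j
  · subst h
    rw [Matrix.one_apply_eq, Matrix.one_apply_eq, Matrix.zero_apply, ← tern_one]
  · rw [Matrix.one_apply_ne h, Matrix.one_apply_ne h, Matrix.zero_apply, ← tern_zero]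

/-- a unit ternion matrix from units -/
def mk3U (α γ : (Matrix (Fin m) (Fin m) F)ˣ) (β : Matrix (Fin m) (Fin m) F) :
    (Matrix (Fin m) (Fin m) (ternions F))ˣ where
  val := mk3 α.val β γ.val
  inv := mk3 α.inv (-(α.inv * β * γ.inv)) γ.inv
  val_inv := by
    rw [mk3_mul, α.val_inv, γ.val_inv]
    rw [show α.val * -(α.inv * β * γ.inv) + β * γ.inv = 0 by
      rw [mul_neg, ← mul_assoc, ← mul_assoc, α.val_inv, one_mul, neg_add_cancel]]
    exact mk3_one
  inv_val := by
    rw [mk3_mul, α.inv_val, γ.inv_val]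
    rw [show α.inv * β + -(α.inv * β * γ.inv) * γ.val = 0 by
      rw [neg_mul, mul_assoc (α.inv * β) γ.inv γ.val, γ.inv_val, mul_one, add_neg_cancel]]
    exact mk3_one

lemma exists_linearEquiv_forall_eq {k : ℕ} {V : Type} [AddCommGroup V] [Module F V]
    [FiniteDimensional F V] (v w : Fin k → V)
    (hv : LinearIndependent F v) (hw : LinearIndependent F w) :
    ∃ e : V ≃ₗ[F] V, ∀ i, e (v i) = w i := by
  obtain ⟨T, hT⟩ := (Submodule.span F (Set.range v)).exists_isCompl
  obtain ⟨T', hT'⟩ := (Submodule.span F (Set.range w)).exists_isCompl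
  have hdim : Module.finrank F T = Module.finrank F T' := by
    have h1 := Submodule.finrank_add_eq_of_isCompl hT
    have h2 := Submodule.finrank_add_eq_of_isCompl hT'
    have h3 : Module.finrank F (Submodule.span F (Set.range v)) = k := by
      rw [finrank_span_eq_card hv, Fintype.card_fin]
    have h4 : Module.finrank F (Submodule.span F (Set.range w)) = k := by
      rw [finrank_span_eq_card hw, Fintype.card_fin]
    omega
  let eT : T ≃ₗ[F] T' := LinearEquiv.ofFinrankEq _ _ hdim
  let eS := (Module.Basis.span hv).equiv (Module.Basis.span hw) (Equiv.refl _)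
  refine ⟨(Submodule.prodEquivOfIsCompl _ _ hT).symm.trans
    ((eS.prodCongr eT).trans (Submodule.prodEquivOfIsCompl _ _ hT')), fun i => ?_⟩
  have h5 : v i = ((Module.Basis.span hv) i : V) := (Module.Basis.coe_span_apply hv i).symm
  simp only [LinearEquiv.trans_apply, h5,
    Submodule.prodEquivOfIsCompl_symm_apply_left]
  have h6 : (eS.prodCongr eT) ((Module.Basis.span hv) i, 0) = ((Module.Basis.span hw) i, 0) := by
    simp [eS, Module.Basis.equiv_apply, -Module.Basis.span_apply]
  rw [h6]
  show ((Module.Basis.span hw) i : V) + ((0 : T') : V) = w i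
  rw [Module.Basis.coe_span_apply hw i]
  simp

lemma exists_unit_vecMul {k : ℕ} (v w : Fin k → (Fin m → F))
    (hv : LinearIndependent F v) (hw : LinearIndependent F w) :
    ∃ γ : (Matrix (Fin m) (Fin m) F)ˣ, ∀ i, Matrix.vecMul (v i) γ.val = w i := by
  obtain ⟨e, he⟩ := exists_linearEquiv_forall_eq v w hv hw
  have hcomp1 : e.symm.toLinearMap.comp e.toLinearMap = LinearMap.id := by ext x; simp
  have hcomp2 : e.toLinearMap.comp e.symm.toLinearMap = LinearMap.id := by ext x; simp
  refine ⟨⟨(LinearMap.toMatrix' e.toLinearMap)ᵀ, (LinearMap.toMatrix' e.symm.toLinearMap)ᵀ,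
    ?_, ?_⟩, fun i => ?_⟩
  · rw [← Matrix.transpose_mul, ← LinearMap.toMatrix'_comp, hcomp1,
      LinearMap.toMatrix'_id, Matrix.transpose_one]
  · rw [← Matrix.transpose_mul, ← LinearMap.toMatrix'_comp, hcomp2,
      LinearMap.toMatrix'_id, Matrix.transpose_one]
  · show Matrix.vecMul (v i) (LinearMap.toMatrix' e.toLinearMap)ᵀ = w i
    rw [Matrix.vecMul_transpose, ← Matrix.toLin'_apply, Matrix.toLin'_toMatrix']
    exact he i

lemma exists_solve {a : Fin m → F} (ha : a ≠ 0) (w : Fin m → F) :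
    ∃ β : Matrix (Fin m) (Fin m) F, Matrix.vecMul a β = w := by
  obtain ⟨i₀, hi₀⟩ := Function.ne_iff.mp ha
  simp only [Pi.zero_apply] at hi₀
  refine ⟨Matrix.of (fun i j => if i = i₀ then (a i₀)⁻¹ * w j else 0), ?_⟩
  funext j
  show (∑ i, a i * if i = i₀ then (a i₀)⁻¹ * w j else 0) = w j
  rw [Finset.sum_eq_single i₀]
  · rw [if_pos rfl, ← mul_assoc, mul_inv_cancel₀ hi₀, one_mul]
  · intro i _ hne; simp [hne]
  · intro h; exact absurd (Finset.mem_univ i₀) h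

end TernionsOrbit
namespace TernionsOrbit

open Matrix

variable {F : Type} [Field F] {m : ℕ}

open Classical in
/-- the orbit invariant -/
noncomputable def iot (X : Fin m → ternions F) : Fin 6 :=
  if pa X = 0 then
    if pc X = 0 then (if pb X = 0 then 0 else 1)
    else (if ∃ l : F, pb X = l • pc X then 3 else 4)
  else if pc X = 0 then 2 else 5

lemma iot_span_eq {X Y : Fin m → ternions F}
    (h : Submodule.span (ternions F) {X} = Submodule.span (ternions F) {Y}) :
    iot X = iot Y := by
  classical
  have hY : Y ∈ Submodule.span (ternions F) {X} := h ▸ Submodule.mem_span_singleton_self Y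
  have hX : X ∈ Submodule.span (ternions F) {Y} := h.symm ▸ Submodule.mem_span_singleton_self X
  obtain ⟨r, hr⟩ := Submodule.mem_span_singleton.mp hY
  obtain ⟨s, hs⟩ := Submodule.mem_span_singleton.mp hX
  have ha1 : pa Y = (r : Matrix (Fin 2) (Fin 2) F) 0 0 • pa X := by rw [← hr, pa_smul]
  have hb1 : pb Y = (r : Matrix (Fin 2) (Fin 2) F) 0 0 • pb X
      + (r : Matrix (Fin 2) (Fin 2) F) 0 1 • pc X := by rw [← hr, pb_smul]
  have hc1 : pc Y = (r : Matrix (Fin 2) (Fin 2) F) 1 1 • pc X := by rw [← hr, pc_smul]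
  have ha2 : pa X = (s : Matrix (Fin 2) (Fin 2) F) 0 0 • pa Y := by rw [← hs, pa_smul]
  have hb2 : pb X = (s : Matrix (Fin 2) (Fin 2) F) 0 0 • pb Y
      + (s : Matrix (Fin 2) (Fin 2) F) 0 1 • pc Y := by rw [← hs, pb_smul]
  have hc2 : pc X = (s : Matrix (Fin 2) (Fin 2) F) 1 1 • pc Y := by rw [← hs, pc_smul]
  have hA : pa X = 0 ↔ pa Y = 0 := by
    constructor
    · intro h0; rw [ha1, h0, smul_zero]
    · intro h0; rw [ha2, h0, smul_zero]
  have hC : pc X = 0 ↔ pc Y = 0 := by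
    constructor
    · intro h0; rw [hc1, h0, smul_zero]
    · intro h0; rw [hc2, h0, smul_zero]
  by_cases hpa : pa X = 0 <;> by_cases hpc : pc X = 0
  · have hpa' : pa Y = 0 := hA.mp hpa
    have hpc' : pc Y = 0 := hC.mp hpc
    have hB : pb X = 0 ↔ pb Y = 0 := by
      constructor
      · intro h0; rw [hb1, h0, hpc, smul_zero, smul_zero, add_zero]
      · intro h0; rw [hb2, h0, hpc', smul_zero, smul_zero, add_zero]
    by_cases hpb : pb X = 0
    · have hpb' : pb Y = 0 := hB.mp hpb
      simp [iot, hpa, hpc, hpb, hpa', hpc', hpb']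
    · have hpb' : ¬pb Y = 0 := fun h0 => hpb (hB.mpr h0)
      simp [iot, hpa, hpc, hpb, hpa', hpc', hpb']
  · have hpa' : pa Y = 0 := hA.mp hpa
    have hpc' : ¬pc Y = 0 := fun h0 => hpc (hC.mpr h0)
    have hr11 : (r : Matrix (Fin 2) (Fin 2) F) 1 1 ≠ 0 := by
      intro h0; exact hpc' (by rw [hc1, h0, zero_smul])
    have hs11 : (s : Matrix (Fin 2) (Fin 2) F) 1 1 ≠ 0 := by
      intro h0; exact hpc (by rw [hc2, h0, zero_smul])
    have hL : (∃ l : F, pb X = l • pc X) ↔ ∃ l : F, pb Y = l • pc Y := by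
      constructor
      · rintro ⟨l, hl⟩
        refine ⟨((r : Matrix (Fin 2) (Fin 2) F) 0 0 * l
          + (r : Matrix (Fin 2) (Fin 2) F) 0 1) * ((r : Matrix (Fin 2) (Fin 2) F) 1 1)⁻¹, ?_⟩
        rw [hb1, hl, hc1, smul_smul, ← add_smul, smul_smul]
        congr 1
        field_simp
      · rintro ⟨l, hl⟩
        refine ⟨((s : Matrix (Fin 2) (Fin 2) F) 0 0 * l
          + (s : Matrix (Fin 2) (Fin 2) F) 0 1) * ((s : Matrix (Fin 2) (Fin 2) F) 1 1)⁻¹, ?_⟩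
        rw [hb2, hl, hc2, smul_smul, ← add_smul, smul_smul]
        congr 1
        field_simp
    by_cases hex : ∃ l : F, pb X = l • pc X
    · have hex' := hL.mp hex
      simp [iot, hpa, hpc, hpa', hpc', hex, hex']
    · have hex' : ¬∃ l : F, pb Y = l • pc Y := fun h0 => hex (hL.mpr h0)
      simp [iot, hpa, hpc, hpa', hpc', hex, hex']
  · have hpa' : ¬pa Y = 0 := fun h0 => hpa (hA.mpr h0)
    have hpc' : pc Y = 0 := hC.mp hpc
    simp [iot, hpa, hpc, hpa', hpc']
  · have hpa' : ¬pa Y = 0 := fun h0 => hpa (hA.mpr h0)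
    have hpc' : ¬pc Y = 0 := fun h0 => hpc (hC.mpr h0)
    simp [iot, hpa, hpc, hpa', hpc']

lemma vecMul_inj {B : Matrix (Fin m) (Fin m) F} (hB : IsUnit B) {v w : Fin m → F}
    (h : Matrix.vecMul v B = Matrix.vecMul w B) : v = w := by
  have h2 : Matrix.vecMul (v - w) B = 0 := by rw [Matrix.sub_vecMul, h, sub_self]
  have := (vecMul_eq_zero_iff hB).mp h2
  exact sub_eq_zero.mp this

lemma iot_vecMul (A : (Matrix (Fin m) (Fin m) (ternions F))ˣ) (X : Fin m → ternions F) :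
    iot (Matrix.vecMul X A.val) = iot X := by
  classical
  have huA : IsUnit (ma A.val) := isUnit_ma A.isUnit
  have huC : IsUnit (mc A.val) := isUnit_mc A.isUnit
  set Y := Matrix.vecMul X A.val with hYdef
  have ha : pa Y = Matrix.vecMul (pa X) (ma A.val) := pa_vecMul X A.val
  have hb : pb Y = Matrix.vecMul (pa X) (mb A.val) + Matrix.vecMul (pb X) (mc A.val) :=
    pb_vecMul X A.val
  have hc : pc Y = Matrix.vecMul (pc X) (mc A.val) := pc_vecMul X A.val
  have hA : pa X = 0 ↔ pa Y = 0 := by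
    rw [ha]
    constructor
    · intro h0; rw [h0, Matrix.zero_vecMul]
    · intro h0; exact (vecMul_eq_zero_iff huA).mp h0
  have hC : pc X = 0 ↔ pc Y = 0 := by
    rw [hc]
    constructor
    · intro h0; rw [h0, Matrix.zero_vecMul]
    · intro h0; exact (vecMul_eq_zero_iff huC).mp h0
  by_cases hpa : pa X = 0 <;> by_cases hpc : pc X = 0
  · have hpa' : pa Y = 0 := hA.mp hpa
    have hpc' : pc Y = 0 := hC.mp hpc
    have hbY : pb Y = Matrix.vecMul (pb X) (mc A.val) := by
      rw [hb, hpa, Matrix.zero_vecMul, zero_add]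
    have hB : pb X = 0 ↔ pb Y = 0 := by
      rw [hbY]
      constructor
      · intro h0; rw [h0, Matrix.zero_vecMul]
      · intro h0; exact (vecMul_eq_zero_iff huC).mp h0
    by_cases hpb : pb X = 0
    · have hpb' : pb Y = 0 := hB.mp hpb
      simp [iot, hpa, hpc, hpb, hpa', hpc', hpb']
    · have hpb' : ¬pb Y = 0 := fun h0 => hpb (hB.mpr h0)
      simp [iot, hpa, hpc, hpb, hpa', hpc', hpb']
  · have hpa' : pa Y = 0 := hA.mp hpa
    have hpc' : ¬pc Y = 0 := fun h0 => hpc (hC.mpr h0)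
    have hbY : pb Y = Matrix.vecMul (pb X) (mc A.val) := by
      rw [hb, hpa, Matrix.zero_vecMul, zero_add]
    have hL : (∃ l : F, pb X = l • pc X) ↔ ∃ l : F, pb Y = l • pc Y := by
      constructor
      · rintro ⟨l, hl⟩
        exact ⟨l, by rw [hbY, hc, hl, smul_vecMul']⟩
      · rintro ⟨l, hl⟩
        refine ⟨l, ?_⟩
        apply vecMul_inj huC
        rw [← hbY, smul_vecMul', ← hc, hl]
    by_cases hex : ∃ l : F, pb X = l • pc X
    · have hex' := hL.mp hex
      simp [iot, hpa, hpc, hpa', hpc', hex, hex']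
    · have hex' : ¬∃ l : F, pb Y = l • pc Y := fun h0 => hex (hL.mpr h0)
      simp [iot, hpa, hpc, hpa', hpc', hex, hex']
  · have hpa' : ¬pa Y = 0 := fun h0 => hpa (hA.mpr h0)
    have hpc' : pc Y = 0 := hC.mp hpc
    simp [iot, hpa, hpc, hpa', hpc']
  · have hpa' : ¬pa Y = 0 := fun h0 => hpa (hA.mpr h0)
    have hpc' : ¬pc Y = 0 := fun h0 => hpc (hC.mpr h0)
    simp [iot, hpa, hpc, hpa', hpc']

end TernionsOrbit
namespace TernionsOrbit

open Matrix

variable {F : Type} [Field F] {m : ℕ}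

lemma pa_zero : pa (0 : Fin m → ternions F) = 0 := rfl
lemma pb_zero : pb (0 : Fin m → ternions F) = 0 := rfl
lemma pc_zero : pc (0 : Fin m → ternions F) = 0 := rfl

lemma pa_add (X Y : Fin m → ternions F) : pa (X + Y) = pa X + pa Y := rfl
lemma pb_add (X Y : Fin m → ternions F) : pb (X + Y) = pb X + pb Y := rfl
lemma pc_add (X Y : Fin m → ternions F) : pc (X + Y) = pc X + pc Y := rfl

lemma comp_single (f : ternions F →+ F) (t : Fin m) (x : ternions F) :
    (fun j => f ((Pi.single t x : Fin m → ternions F) j)) = (Pi.single t (f x) : Fin m → F) := by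
  funext j
  by_cases h : j = t
  · subst h; rw [Pi.single_eq_same, Pi.single_eq_same]
  · rw [Pi.single_eq_of_ne h, Pi.single_eq_of_ne h, map_zero]

lemma pa_single (t : Fin m) (x : ternions F) :
    pa (Pi.single t x) = Pi.single t ((x : Matrix (Fin 2) (Fin 2) F) 0 0) :=
  comp_single (entryHom 0 0) t x
lemma pb_single (t : Fin m) (x : ternions F) :
    pb (Pi.single t x) = Pi.single t ((x : Matrix (Fin 2) (Fin 2) F) 0 1) :=
  comp_single (entryHom 0 1) t x
lemma pc_single (t : Fin m) (x : ternions F) :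
    pc (Pi.single t x) = Pi.single t ((x : Matrix (Fin 2) (Fin 2) F) 1 1) :=
  comp_single (entryHom 1 1) t x

/-- the canonical representatives -/
noncomputable def rp [NeZero m] (j : Fin 6) : Fin m → ternions F :=
  if j = 0 then 0
  else if j = 1 then (Pi.single 0 (tern 0 1 0) : Fin m → ternions F)
  else if j = 2 then (Pi.single 0 (tern 1 0 0) : Fin m → ternions F)
  else if j = 3 then (Pi.single 0 (tern 0 0 1) : Fin m → ternions F)
  else if j = 4 then (Pi.single 0 (tern 0 0 1) : Fin m → ternions F)
    + (Pi.single 1 (tern 0 1 0) : Fin m → ternions F)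
  else (Pi.single 0 (tern 1 0 1) : Fin m → ternions F)

section Rp

variable [NeZero m]

lemma rp_0 : (rp 0 : Fin m → ternions F) = 0 := by
  simp [rp]
lemma rp_1 : (rp 1 : Fin m → ternions F) = (Pi.single 0 (tern 0 1 0) : Fin m → ternions F) := by
  simp [rp]
lemma rp_2 : (rp 2 : Fin m → ternions F) = (Pi.single 0 (tern 1 0 0) : Fin m → ternions F) := by
  simp [rp]
lemma rp_3 : (rp 3 : Fin m → ternions F) = (Pi.single 0 (tern 0 0 1) : Fin m → ternions F) := by
  simp [rp]
lemma rp_4 : (rp 4 : Fin m → ternions F)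
    = (Pi.single 0 (tern 0 0 1) : Fin m → ternions F)
      + (Pi.single 1 (tern 0 1 0) : Fin m → ternions F) := by
  simp [rp]
lemma rp_5 : (rp 5 : Fin m → ternions F) = (Pi.single 0 (tern 1 0 1) : Fin m → ternions F) := by
  simp [rp]

lemma single_one_ne_zero (t : Fin m) : (Pi.single t 1 : Fin m → F) ≠ 0 := by
  intro h
  have := congrFun h t
  rw [Pi.single_eq_same, Pi.zero_apply] at this
  exact one_ne_zero this

lemma pa_rp0 : pa (rp 0 : Fin m → ternions F) = 0 := by rw [rp_0, pa_zero]
lemma pb_rp0 : pb (rp 0 : Fin m → ternions F) = 0 := by rw [rp_0, pb_zero]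
lemma pc_rp0 : pc (rp 0 : Fin m → ternions F) = 0 := by rw [rp_0, pc_zero]
lemma pa_rp1 : pa (rp 1 : Fin m → ternions F) = 0 := by
  rw [rp_1, pa_single, tern_val00, Pi.single_zero]
lemma pb_rp1 : pb (rp 1 : Fin m → ternions F) = Pi.single 0 1 := by
  rw [rp_1, pb_single, tern_val01]
lemma pc_rp1 : pc (rp 1 : Fin m → ternions F) = 0 := by
  rw [rp_1, pc_single, tern_val11, Pi.single_zero]
lemma pa_rp2 : pa (rp 2 : Fin m → ternions F) = Pi.single 0 1 := by
  rw [rp_2, pa_single, tern_val00]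
lemma pb_rp2 : pb (rp 2 : Fin m → ternions F) = 0 := by
  rw [rp_2, pb_single, tern_val01, Pi.single_zero]
lemma pc_rp2 : pc (rp 2 : Fin m → ternions F) = 0 := by
  rw [rp_2, pc_single, tern_val11, Pi.single_zero]
lemma pa_rp3 : pa (rp 3 : Fin m → ternions F) = 0 := by
  rw [rp_3, pa_single, tern_val00, Pi.single_zero]
lemma pb_rp3 : pb (rp 3 : Fin m → ternions F) = 0 := by
  rw [rp_3, pb_single, tern_val01, Pi.single_zero]
lemma pc_rp3 : pc (rp 3 : Fin m → ternions F) = Pi.single 0 1 := by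
  rw [rp_3, pc_single, tern_val11]
lemma pa_rp4 : pa (rp 4 : Fin m → ternions F) = 0 := by
  rw [rp_4, pa_add, pa_single, pa_single, tern_val00, tern_val00, Pi.single_zero, Pi.single_zero,
    add_zero]
lemma pb_rp4 : pb (rp 4 : Fin m → ternions F) = Pi.single 1 1 := by
  rw [rp_4, pb_add, pb_single, pb_single, tern_val01, tern_val01, Pi.single_zero, zero_add]
lemma pc_rp4 : pc (rp 4 : Fin m → ternions F) = Pi.single 0 1 := by
  rw [rp_4, pc_add, pc_single, pc_single, tern_val11, tern_val11, Pi.single_zero, add_zero]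
lemma pa_rp5 : pa (rp 5 : Fin m → ternions F) = Pi.single 0 1 := by
  rw [rp_5, pa_single, tern_val00]
lemma pb_rp5 : pb (rp 5 : Fin m → ternions F) = 0 := by
  rw [rp_5, pb_single, tern_val01, Pi.single_zero]
lemma pc_rp5 : pc (rp 5 : Fin m → ternions F) = Pi.single 0 1 := by
  rw [rp_5, pc_single, tern_val11]

lemma not_ex_l (h01 : (0 : Fin m) ≠ 1) :
    ¬∃ l : F, (Pi.single 1 1 : Fin m → F) = l • (Pi.single 0 1 : Fin m → F) := by
  rintro ⟨l, hl⟩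
  have := congrFun hl 1
  rw [Pi.single_eq_same, Pi.smul_apply, Pi.single_eq_of_ne h01.symm, smul_zero] at this
  exact one_ne_zero this

lemma iot_rp (h01 : (0 : Fin m) ≠ 1) (j : Fin 6) : iot (rp j : Fin m → ternions F) = j := by
  classical
  fin_cases j
  · simp [iot, pa_rp0, pb_rp0, pc_rp0]
  · simp [iot, pa_rp1, pb_rp1, pc_rp1, single_one_ne_zero]
  · simp [iot, pa_rp2, pb_rp2, pc_rp2, single_one_ne_zero]
  · have hex : ∃ l : F, (0 : Fin m → F) = l • (Pi.single 0 1 : Fin m → F) :=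
      ⟨0, by rw [zero_smul]⟩
    simp [iot, pa_rp3, pb_rp3, pc_rp3, single_one_ne_zero, hex]
  · simp [iot, pa_rp4, pb_rp4, pc_rp4, single_one_ne_zero, not_ex_l h01]
  · simp [iot, pa_rp5, pb_rp5, pc_rp5, single_one_ne_zero]

end Rp

end TernionsOrbit
namespace TernionsOrbit

open Matrix

variable {F : Type} [Field F] {m : ℕ}

lemma pa_vecMul_mk3U (X : Fin m → ternions F) (α γ : (Matrix (Fin m) (Fin m) F)ˣ)
    (β : Matrix (Fin m) (Fin m) F) :
    pa (Matrix.vecMul X (mk3U α γ β).val) = Matrix.vecMul (pa X) α.val := by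
  rw [show (mk3U α γ β).val = mk3 α.val β γ.val from rfl, pa_vecMul, ma_mk3]

lemma pb_vecMul_mk3U (X : Fin m → ternions F) (α γ : (Matrix (Fin m) (Fin m) F)ˣ)
    (β : Matrix (Fin m) (Fin m) F) :
    pb (Matrix.vecMul X (mk3U α γ β).val)
      = Matrix.vecMul (pa X) β + Matrix.vecMul (pb X) γ.val := by
  rw [show (mk3U α γ β).val = mk3 α.val β γ.val from rfl, pb_vecMul, mb_mk3, mc_mk3]

lemma pc_vecMul_mk3U (X : Fin m → ternions F) (α γ : (Matrix (Fin m) (Fin m) F)ˣ)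
    (β : Matrix (Fin m) (Fin m) F) :
    pc (Matrix.vecMul X (mk3U α γ β).val) = Matrix.vecMul (pc X) γ.val := by
  rw [show (mk3U α γ β).val = mk3 α.val β γ.val from rfl, pc_vecMul, mc_mk3]

lemma li1 {v : Fin m → F} (hv : v ≠ 0) : LinearIndependent F ![v] :=
  linearIndependent_unique_iff.mpr (by simpa using hv)

lemma norm_lemma [NeZero m] (h01 : (0 : Fin m) ≠ 1) (X : Fin m → ternions F) :
    ∃ A : (Matrix (Fin m) (Fin m) (ternions F))ˣ,
      Submodule.span (ternions F) {Matrix.vecMul X A.val} =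
        Submodule.span (ternions F) {(rp (iot X) : Fin m → ternions F)} := by
  classical
  by_cases hpa : pa X = 0 <;> by_cases hpc : pc X = 0
  · -- pa = 0, pc = 0
    by_cases hpb : pb X = 0
    · have hi : iot X = 0 := by simp [iot, hpa, hpc, hpb]
      refine ⟨1, ?_⟩
      have hX0 : X = 0 := vec_ext (by rw [hpa, pa_zero]) (by rw [hpb, pb_zero])
        (by rw [hpc, pc_zero])
      rw [Units.val_one, Matrix.vecMul_one, hi, hX0, rp_0]
    · have hi : iot X = 1 := by simp [iot, hpa, hpc, hpb]
      obtain ⟨γ, hγ⟩ := exists_unit_vecMul ![pb X] ![Pi.single 0 1] (li1 hpb)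
        (li1 (single_one_ne_zero 0))
      have hb0 := hγ 0
      simp only [Matrix.cons_val_zero] at hb0
      refine ⟨mk3U 1 γ 0, ?_⟩
      have hY : Matrix.vecMul X (mk3U 1 γ 0).val = rp 1 := by
        apply vec_ext
        · rw [pa_vecMul_mk3U, hpa, Matrix.zero_vecMul, pa_rp1]
        · rw [pb_vecMul_mk3U, hpa, Matrix.zero_vecMul, zero_add, hb0, pb_rp1]
        · rw [pc_vecMul_mk3U, hpc, Matrix.zero_vecMul, pc_rp1]
      rw [hY, hi]
  · -- pa = 0, pc ≠ 0
    by_cases hex : ∃ l : F, pb X = l • pc X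
    · have hi : iot X = 3 := by simp [iot, hpa, hpc, hex]
      obtain ⟨l, hl⟩ := hex
      obtain ⟨γ, hγ⟩ := exists_unit_vecMul ![pc X] ![Pi.single 0 1] (li1 hpc)
        (li1 (single_one_ne_zero 0))
      have hc0 := hγ 0
      simp only [Matrix.cons_val_zero] at hc0
      refine ⟨mk3U 1 γ 0, ?_⟩
      have hY : Matrix.vecMul X (mk3U 1 γ 0).val = (tern 1 l 1) • (rp 3 : Fin m → ternions F) := by
        apply vec_ext
        · rw [pa_vecMul_mk3U, hpa, Matrix.zero_vecMul, pa_smul, tern_val00, pa_rp3, smul_zero]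
        · rw [pb_vecMul_mk3U, hpa, Matrix.zero_vecMul, zero_add, hl, smul_vecMul', hc0,
            pb_smul, tern_val00, tern_val01, pb_rp3, pc_rp3, smul_zero, zero_add]
        · rw [pc_vecMul_mk3U, hc0, pc_smul, tern_val11, pc_rp3, one_smul]
      rw [hY, hi, Submodule.span_singleton_smul_eq (isUnit_tern l one_ne_zero one_ne_zero)]
    · have hi : iot X = 4 := by simp [iot, hpa, hpc, hex]
      have hli : LinearIndependent F ![pb X, pc X] := by
        rw [linearIndependent_fin2]
        constructor
        · simpa using hpc
        · intro a ha
          simp only [Matrix.cons_val_one, Matrix.head_cons, Matrix.cons_val_zero] at ha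
          exact hex ⟨a, ha.symm⟩
      have hli' : LinearIndependent F ![(Pi.single 1 1 : Fin m → F), Pi.single 0 1] := by
        rw [linearIndependent_fin2]
        constructor
        · simpa using single_one_ne_zero (F := F) (0 : Fin m)
        · intro a ha
          simp only [Matrix.cons_val_one, Matrix.head_cons, Matrix.cons_val_zero] at ha
          exact not_ex_l h01 ⟨a, ha.symm⟩
      obtain ⟨γ, hγ⟩ := exists_unit_vecMul ![pb X, pc X]
        ![(Pi.single 1 1 : Fin m → F), Pi.single 0 1] hli hli'
      have hb0 := hγ 0
      have hc1 := hγ 1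
      simp only [Matrix.cons_val_zero, Matrix.cons_val_one, Matrix.head_cons] at hb0 hc1
      refine ⟨mk3U 1 γ 0, ?_⟩
      have hY : Matrix.vecMul X (mk3U 1 γ 0).val = rp 4 := by
        apply vec_ext
        · rw [pa_vecMul_mk3U, hpa, Matrix.zero_vecMul, pa_rp4]
        · rw [pb_vecMul_mk3U, hpa, Matrix.zero_vecMul, zero_add, hb0, pb_rp4]
        · rw [pc_vecMul_mk3U, hc1, pc_rp4]
      rw [hY, hi]
  · -- pa ≠ 0, pc = 0
    have hi : iot X = 2 := by simp [iot, hpa, hpc]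
    obtain ⟨α, hα⟩ := exists_unit_vecMul ![pa X] ![Pi.single 0 1] (li1 hpa)
      (li1 (single_one_ne_zero 0))
    have ha0 := hα 0
    simp only [Matrix.cons_val_zero] at ha0
    obtain ⟨β, hβ⟩ := exists_solve hpa (-(pb X))
    refine ⟨mk3U α 1 β, ?_⟩
    have hY : Matrix.vecMul X (mk3U α 1 β).val = rp 2 := by
      apply vec_ext
      · rw [pa_vecMul_mk3U, ha0, pa_rp2]
      · rw [pb_vecMul_mk3U, hβ, Units.val_one, Matrix.vecMul_one, neg_add_cancel, pb_rp2]
      · rw [pc_vecMul_mk3U, hpc, Matrix.zero_vecMul, pc_rp2]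
    rw [hY, hi]
  · -- pa ≠ 0, pc ≠ 0
    have hi : iot X = 5 := by simp [iot, hpa, hpc]
    obtain ⟨α, hα⟩ := exists_unit_vecMul ![pa X] ![Pi.single 0 1] (li1 hpa)
      (li1 (single_one_ne_zero 0))
    have ha0 := hα 0
    simp only [Matrix.cons_val_zero] at ha0
    obtain ⟨γ, hγ⟩ := exists_unit_vecMul ![pc X] ![Pi.single 0 1] (li1 hpc)
      (li1 (single_one_ne_zero 0))
    have hc0 := hγ 0
    simp only [Matrix.cons_val_zero] at hc0
    obtain ⟨β, hβ⟩ := exists_solve hpa (-(Matrix.vecMul (pb X) γ.val))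
    refine ⟨mk3U α γ β, ?_⟩
    have hY : Matrix.vecMul X (mk3U α γ β).val = rp 5 := by
      apply vec_ext
      · rw [pa_vecMul_mk3U, ha0, pa_rp5]
      · rw [pb_vecMul_mk3U, hβ, neg_add_cancel, pb_rp5]
      · rw [pc_vecMul_mk3U, hc0, pc_rp5]
    rw [hY, hi]

end TernionsOrbit
namespace TernionsOrbit

open Matrix

variable {F : Type} [Field F] {m : ℕ}

/-- right multiplication as an R-linear map -/
def rmulL (A : Matrix (Fin m) (Fin m) (ternions F)) :
    (Fin m → ternions F) →ₗ[ternions F] (Fin m → ternions F) where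
  toFun v := Matrix.vecMul v A
  map_add' u v := Matrix.add_vecMul A u v
  map_smul' r v := by
    funext i
    show (∑ j, (r • v) j * A j i) = r • (∑ j, v j * A j i)
    rw [Finset.smul_sum]
    refine Finset.sum_congr rfl fun j _ => ?_
    show (r * v j) * A j i = r • (v j * A j i)
    rw [smul_eq_mul, mul_assoc]

lemma image_span (A : Matrix (Fin m) (Fin m) (ternions F)) (X : Fin m → ternions F) :
    (fun v => Matrix.vecMul v A) '' ((Submodule.span (ternions F) {X} :
        Submodule (ternions F) (Fin m → ternions F)) : Set (Fin m → ternions F)) =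
      ((Submodule.span (ternions F) {Matrix.vecMul X A} :
        Submodule (ternions F) (Fin m → ternions F)) : Set (Fin m → ternions F)) := by
  have h0 : (fun v => Matrix.vecMul v A) = ⇑(rmulL A) := rfl
  rw [h0, ← Submodule.map_coe, Submodule.map_span, Set.image_singleton,
    show (rmulL A) X = Matrix.vecMul X A from rfl]

end TernionsOrbit

open TernionsOrbit
theorem ternion_cyclic_submodule_orbit_count (F : Type) [Field F] (n : ℕ) (hn : 1 ≤ n) :
    Nat.card (Quot (fun M M' : {M : Submodule (ternions F) (Fin (n + 1) → ternions F) //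
        ∃ X, M = Submodule.span (ternions F) {X}} =>
      ∃ A : (Matrix (Fin (n + 1)) (Fin (n + 1)) (ternions F))ˣ,
        (fun v => Matrix.vecMul v A.val) '' (M.val : Set (Fin (n + 1) → ternions F)) =
          (M'.val : Set (Fin (n + 1) → ternions F)))) = 6 := by
  classical
  have h01 : (0 : Fin (n + 1)) ≠ 1 := by
    intro h
    have h2 := congrArg Fin.val h
    rw [Fin.val_zero, Fin.val_one'] at h2
    rw [Nat.mod_eq_of_lt (by omega)] at h2
    omega
  let SubT := {M : Submodule (ternions F) (Fin (n + 1) → ternions F) //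
    ∃ X, M = Submodule.span (ternions F) {X}}
  let rel : SubT → SubT → Prop := fun M M' =>
    ∃ A : (Matrix (Fin (n + 1)) (Fin (n + 1)) (ternions F))ˣ,
      (fun v => Matrix.vecMul v A.val) '' (M.val : Set (Fin (n + 1) → ternions F)) =
        (M'.val : Set (Fin (n + 1) → ternions F))
  show Nat.card (Quot rel) = 6
  have key : ∀ M M' : SubT, rel M M' → iot M.2.choose = iot M'.2.choose := by
    rintro M M' ⟨A, hA⟩
    have hX : M.val = Submodule.span (ternions F) {M.2.choose} := M.2.choose_spec
    have hY : M'.val = Submodule.span (ternions F) {M'.2.choose} := M'.2.choose_spec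
    rw [hX, hY, image_span A.val M.2.choose] at hA
    have hspan : Submodule.span (ternions F) {Matrix.vecMul M.2.choose A.val} =
        Submodule.span (ternions F) {M'.2.choose} := SetLike.coe_injective hA
    calc iot M.2.choose = iot (Matrix.vecMul M.2.choose A.val) :=
          (iot_vecMul A M.2.choose).symm
      _ = iot M'.2.choose := iot_span_eq hspan
  let f : Quot rel → Fin 6 := Quot.lift (fun M => iot M.2.choose) key
  have hsurj : Function.Surjective f := by
    intro j
    let N : SubT := ⟨Submodule.span (ternions F) {(rp j : Fin (n + 1) → ternions F)},
      ⟨rp j, rfl⟩⟩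
    refine ⟨Quot.mk rel N, ?_⟩
    have h1 : Submodule.span (ternions F) {(rp j : Fin (n + 1) → ternions F)} =
        Submodule.span (ternions F) {N.2.choose} := N.2.choose_spec
    have h2 : f (Quot.mk rel N) = iot N.2.choose := rfl
    rw [h2, ← iot_span_eq h1, iot_rp (F := F) h01 j]
  have hinj : Function.Injective f := by
    intro q q'
    induction q using Quot.ind with
    | _ M =>
    induction q' using Quot.ind with
    | _ M' =>
    intro h
    have h' : iot M.2.choose = iot M'.2.choose := h
    obtain ⟨A, hA⟩ := norm_lemma h01 M.2.choose
    obtain ⟨A', hA'⟩ := norm_lemma h01 M'.2.choose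
    rw [h'] at hA
    let N : SubT := ⟨Submodule.span (ternions F)
      {(rp (iot M'.2.choose) : Fin (n + 1) → ternions F)}, ⟨_, rfl⟩⟩
    have r1 : rel M N := by
      refine ⟨A, ?_⟩
      rw [M.2.choose_spec, image_span A.val M.2.choose, hA]
    have r2 : rel M' N := by
      refine ⟨A', ?_⟩
      rw [M'.2.choose_spec, image_span A'.val M'.2.choose, hA']
    rw [Quot.sound r1, Quot.sound r2]
  exact Nat.card_eq_of_equiv_fin (Equiv.ofBijective f ⟨hinj, hsurj⟩)
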